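/- Let f ∈ ℂ[x1,…,xn] be an irreducible homogeneous polynomial of degree d ≥ 2 (so that V(f) is an irreducible affine cone that is not a linear space). Then the dual variety is contained in the ED data singular locus: V(f)* ⊆ DS(f). -/

import Mathlib

open MvPolynomial Pointwise

/-- Gradient of a multivariate polynomial at a point. -/
noncomputable def grad {n : ℕ} (f : MvPolynomial (Fin n) ℂ) (x : Fin n → ℂ) : Fin n → ℂ :=
  fun i => eval x (pderiv i f)

/-- Zariski closure: zero locus of the ideal of all polynomials vanishing on `S`. -/
def zclosure {σ : Type} (S : Set (σ → ℂ)) : Set (σ → ℂ) :=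
  {x | ∀ p : MvPolynomial σ ℂ, (∀ s ∈ S, eval s p = 0) → eval x p = 0}

/-- Zero locus `V(f)`. -/
def Vp {n : ℕ} (f : MvPolynomial (Fin n) ℂ) : Set (Fin n → ℂ) := {x | eval x f = 0}

/-- Regular locus. -/
def RegL {n : ℕ} (f : MvPolynomial (Fin n) ℂ) : Set (Fin n → ℂ) :=
  {x | eval x f = 0 ∧ grad f x ≠ 0}

/-- Singular locus. -/
def SingL {n : ℕ} (f : MvPolynomial (Fin n) ℂ) : Set (Fin n → ℂ) :=
  {x | eval x f = 0 ∧ grad f x = 0}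

/-- ED correspondence: Zariski closure of pairs (u,x), x regular, u - x ∈ ℂ·∇f(x),
encoded as functions on `Fin n ⊕ Fin n`. -/
def EDcorr {n : ℕ} (f : MvPolynomial (Fin n) ℂ) : Set ((Fin n ⊕ Fin n) → ℂ) :=
  zclosure {w | ∃ u x : Fin n → ℂ, w = Sum.elim u x ∧ x ∈ RegL f ∧ ∃ t : ℂ, u - x = t • grad f x}

/-- ED data singular locus. -/
def DS {n : ℕ} (f : MvPolynomial (Fin n) ℂ) : Set (Fin n → ℂ) :=
  {u | ∃ x, Sum.elim u x ∈ EDcorr f ∧ x ∈ SingL f}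

/-- Dual variety. -/
def dualV {n : ℕ} (f : MvPolynomial (Fin n) ℂ) : Set (Fin n → ℂ) :=
  zclosure {y | ∃ (t : ℂ) (x : Fin n → ℂ), x ∈ RegL f ∧ y = t • grad f x}

/-- Isotropic quadric. -/
def isoQ (n : ℕ) : Set (Fin n → ℂ) := {x | ∑ i, (x i) ^ 2 = 0}

/-- ED data isotropic locus. -/
def DI {n : ℕ} (f : MvPolynomial (Fin n) ℂ) : Set (Fin n → ℂ) :=
  {u | ∃ x, Sum.elim u x ∈ EDcorr f ∧ x ∈ isoQ n ∩ Vp f}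

/-- Zariski-closed sets. -/
def IsZClosed {σ : Type} (S : Set (σ → ℂ)) : Prop := zclosure S = S

/-- Irreducibility with respect to Zariski-closed sets. -/
def IsZIrreducible {σ : Type} (S : Set (σ → ℂ)) : Prop :=
  S.Nonempty ∧ ∀ C₁ C₂ : Set (σ → ℂ), IsZClosed C₁ → IsZClosed C₂ →
    S ⊆ C₁ ∪ C₂ → S ⊆ C₁ ∨ S ⊆ C₂

/-- `C` is an irreducible component of `S`. -/
def IsIrredComponentOf {σ : Type} (C S : Set (σ → ℂ)) : Prop :=
  C ⊆ S ∧ IsZClosed C ∧ IsZIrreducible C ∧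
    ∀ C' : Set (σ → ℂ), IsZClosed C' → IsZIrreducible C' → C ⊆ C' → C' ⊆ S → C' = C


section Aux

lemma eval_smul_of_homog {n d : ℕ} {f : MvPolynomial (Fin n) ℂ} (hf : f.IsHomogeneous d)
    (s : ℂ) (x : Fin n → ℂ) : eval (s • x) f = s ^ d * eval x f := by
  rw [eval_eq, eval_eq, Finset.mul_sum]
  refine Finset.sum_congr rfl fun m hm => ?_
  have hdeg : ∑ i ∈ m.support, m i = d := by
    by_contra h
    exact (MvPolynomial.mem_support_iff.mp hm) (hf.coeff_eq_zero h)
  calc coeff m f * ∏ i ∈ m.support, (s • x) i ^ m i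
      = coeff m f * ∏ i ∈ m.support, (s ^ m i * x i ^ m i) := by
        simp [Pi.smul_apply, smul_eq_mul, mul_pow]
    _ = coeff m f * ((∏ i ∈ m.support, s ^ m i) * ∏ i ∈ m.support, x i ^ m i) := by
        rw [Finset.prod_mul_distrib]
    _ = s ^ d * (coeff m f * ∏ i ∈ m.support, x i ^ m i) := by
        rw [Finset.prod_pow_eq_pow_sum, hdeg]; ring

lemma pderiv_homog {n d : ℕ} {f : MvPolynomial (Fin n) ℂ} (hf : f.IsHomogeneous d) (i : Fin n) :
    (pderiv i f).IsHomogeneous (d - 1) := by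
  conv_lhs => rw [← support_sum_monomial_coeff f]
  rw [map_sum]
  refine MvPolynomial.IsHomogeneous.sum _ _ _ fun m hm => ?_
  rw [pderiv_monomial]
  by_cases h : m i = 0
  · simp [h]
    exact isHomogeneous_zero _ _ _
  · refine isHomogeneous_monomial _ ?_
    have hmd : m.degree = d := by
      by_contra hne
      exact (MvPolynomial.mem_support_iff.mp hm) (hf.coeff_eq_zero hne)
    have hsum : (m - Finsupp.single i 1) + Finsupp.single i 1 = m := by
      ext j
      by_cases hj : j = i
      · subst hj
        simp [Nat.sub_add_cancel (Nat.one_le_iff_ne_zero.mpr h)]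
      · simp [Finsupp.single_eq_of_ne' (Ne.symm hj)]
    have hdd : (m - Finsupp.single i 1).degree + (Finsupp.single i 1).degree = d := by
      rw [Finsupp.degree_eq_weight_one] at hmd ⊢
      rw [← map_add, hsum]; exact hmd
    have hs1 : (Finsupp.single i 1 : Fin n →₀ ℕ).degree = 1 := by
      exact Finsupp.degree_single i 1
    omega

lemma grad_smul {n d : ℕ} {f : MvPolynomial (Fin n) ℂ} (hf : f.IsHomogeneous d)
    (s : ℂ) (x : Fin n → ℂ) : grad f (s • x) = s ^ (d - 1) • grad f x := by
  funext i
  simp only [grad, Pi.smul_apply, smul_eq_mul]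
  exact eval_smul_of_homog (pderiv_homog hf i) s x

lemma grad_zero_of_homog {n d : ℕ} (hd : 2 ≤ d) {f : MvPolynomial (Fin n) ℂ}
    (hf : f.IsHomogeneous d) : grad f (0 : Fin n → ℂ) = 0 := by
  have h := grad_smul hf 0 0
  rw [zero_smul] at h
  rw [h, zero_pow (by omega : d - 1 ≠ 0), zero_smul]

lemma eval_zero_of_homog {n d : ℕ} (hd : 2 ≤ d) {f : MvPolynomial (Fin n) ℂ}
    (hf : f.IsHomogeneous d) : eval (0 : Fin n → ℂ) f = 0 := by
  have h := eval_smul_of_homog hf 0 0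
  rw [zero_smul, zero_pow (by omega : d ≠ 0), zero_mul] at h
  exact h

lemma key_vanish {n d : ℕ} (hd : 2 ≤ d) {f : MvPolynomial (Fin n) ℂ} (hf : f.IsHomogeneous d)
    (p : MvPolynomial (Fin n ⊕ Fin n) ℂ)
    (hp : ∀ w ∈ {w | ∃ u x : Fin n → ℂ, w = Sum.elim u x ∧ x ∈ RegL f ∧
        ∃ t : ℂ, u - x = t • grad f x}, eval w p = 0)
    (t : ℂ) (x : Fin n → ℂ) (hx : x ∈ RegL f) :
    eval (Sum.elim (t • grad f x) 0) p = 0 := by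
  set g : Fin n ⊕ Fin n → Polynomial ℂ := Sum.elim
      (fun j => Polynomial.C (x j) * Polynomial.X + Polynomial.C (t * grad f x j))
      (fun j => Polynomial.C (x j) * Polynomial.X) with hg
  set P : Polynomial ℂ := eval₂ Polynomial.C g p with hP
  have hPeval : ∀ s : ℂ, P.eval s = eval (Sum.elim (s • x + t • grad f x) (s • x)) p := by
    intro s
    have := MvPolynomial.eval₂_comp_left (Polynomial.evalRingHom s) Polynomial.C g p
    rw [show (Polynomial.evalRingHom s) (eval₂ Polynomial.C g p) = P.eval s from rfl] at this
    rw [this]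
    rw [show (eval (Sum.elim (s • x + t • grad f x) (s • x)) p)
        = eval₂ (RingHom.id ℂ) (Sum.elim (s • x + t • grad f x) (s • x)) p from rfl]
    congr 1
    · ext a; simp
    · funext i
      cases i with
      | inl j => simp [hg, Pi.add_apply, Pi.smul_apply, smul_eq_mul]; ring
      | inr j => simp [hg, Pi.smul_apply, smul_eq_mul]; ring
  have hroot : ∀ s : ℂ, s ≠ 0 → P.eval s = 0 := by
    intro s hs
    rw [hPeval s]
    apply hp
    refine ⟨s • x + t • grad f x, s • x, rfl, ⟨?_, ?_⟩, t / s ^ (d - 1), ?_⟩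
    · rw [eval_smul_of_homog hf, hx.1, mul_zero]
    · rw [grad_smul hf]
      intro hzero
      rcases smul_eq_zero.mp hzero with h | h
      · exact pow_ne_zero _ hs h
      · exact hx.2 h
    · rw [grad_smul hf, smul_smul, div_mul_cancel₀ _ (pow_ne_zero _ hs)]
      abel
  have hPzero : P = 0 := by
    apply Polynomial.eq_zero_of_infinite_isRoot
    apply Set.Infinite.mono (s := {(0:ℂ)}ᶜ)
    · intro s hs; exact hroot s hs
    · exact Set.Finite.infinite_compl (Set.finite_singleton 0)
  have h0 := hPeval 0
  rw [hPzero, Polynomial.eval_zero] at h0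
  rw [zero_smul, zero_add] at h0
  exact h0.symm

end Aux

/-- Theorem 1, inclusion (1): for an irreducible affine cone `V(f)` (with `f` irreducible
homogeneous of degree `d ≥ 2`, so `V(f)` is not a linear space), the dual variety is contained
in the ED data singular locus. -/
theorem dual_subset_DS {n d : ℕ} (hd : 2 ≤ d) (f : MvPolynomial (Fin n) ℂ)
    (hf : f.IsHomogeneous d) (hirr : Irreducible f) :
    dualV f ⊆ DS f := by
  intro u hu
  refine ⟨0, ?_, eval_zero_of_homog hd hf, grad_zero_of_homog hd hf⟩
  intro p hp
  set q : MvPolynomial (Fin n) ℂ :=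
    eval₂ MvPolynomial.C (Sum.elim MvPolynomial.X (fun _ => 0)) p with hq
  have hqe : ∀ v : Fin n → ℂ, eval v q = eval (Sum.elim v 0) p := by
    intro v
    have := MvPolynomial.eval₂_comp_left (eval v) MvPolynomial.C
      (Sum.elim MvPolynomial.X (fun _ => (0 : MvPolynomial (Fin n) ℂ))) p
    rw [show (eval v) (eval₂ MvPolynomial.C (Sum.elim MvPolynomial.X
        (fun _ => (0 : MvPolynomial (Fin n) ℂ))) p) = eval v q from rfl] at this
    rw [this]
    rw [show eval (Sum.elim v 0) p = eval₂ (RingHom.id ℂ) (Sum.elim v 0) p from rfl]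
    congr 1
    · ext a; simp
    · funext i; cases i <;> simp
  rw [← hqe u]
  apply hu q
  rintro y ⟨t, x, hx, rfl⟩
  rw [hqe]
  exact key_vanish hd hf p hp t x hx
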